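/- Basic inequality for the LES estimator (deterministic form of the appendix Lemma): assume y = Xβ* + ε with (2/n)·max_{k,j} |X_{kj}^T ε| ≤ γ, where γ = λα. Then for every minimizer β̂ of Q and every β ∈ ℝ^p: (1/n)‖X(β̂ − β*)‖₂² + γ‖β̂ − β‖₁ ≤ (1/n)‖X(β − β*)‖₂² + 2γ Σ_{k ∈ G(β)} (1 + p_k) ‖β̂_k − β_k‖₁. -/

import Mathlib

lemma lse_lip {m : ℕ} (hm : 0 < m) (u v : Fin m → ℝ) :
    Real.log (∑ j, Real.exp (u j)) ≤ Real.log (∑ j, Real.exp (v j)) + ∑ j, |u j - v j| := by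
  have hne : (Finset.univ : Finset (Fin m)).Nonempty := by
    simp [Finset.univ_nonempty_iff, ← Fin.pos_iff_nonempty, hm]
  set M : ℝ := ∑ j, |u j - v j| with hM
  have hpos : (0:ℝ) < ∑ j, Real.exp (v j) := Finset.sum_pos (fun j _ => Real.exp_pos _) hne
  have hposu : (0:ℝ) < ∑ j, Real.exp (u j) := Finset.sum_pos (fun j _ => Real.exp_pos _) hne
  have hle : (∑ j, Real.exp (u j)) ≤ Real.exp M * ∑ j, Real.exp (v j) := by
    rw [Finset.mul_sum]
    refine Finset.sum_le_sum fun j _ => ?_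
    rw [← Real.exp_add]
    apply Real.exp_le_exp.2
    have h1 : u j - v j ≤ M := le_trans (le_abs_self _)
      (Finset.single_le_sum (fun j _ => abs_nonneg (u j - v j)) (Finset.mem_univ j))
    linarith
  calc Real.log (∑ j, Real.exp (u j)) ≤ Real.log (Real.exp M * ∑ j, Real.exp (v j)) :=
        Real.log_le_log hposu hle
    _ = Real.log (∑ j, Real.exp (v j)) + M := by
        rw [Real.log_mul (Real.exp_ne_zero _) (ne_of_gt hpos), Real.log_exp]; ring

lemma lse_jensen {m : ℕ} (hm : 0 < m) (x : Fin m → ℝ) :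
    Real.log m + (∑ j, x j) / m ≤ Real.log (∑ j, Real.exp (x j)) := by
  have hne : (Finset.univ : Finset (Fin m)).Nonempty := by
    simp [Finset.univ_nonempty_iff, ← Fin.pos_iff_nonempty, hm]
  have hm' : (0:ℝ) < m := Nat.cast_pos.2 hm
  have hpos : (0:ℝ) < ∑ j, Real.exp (x j) := Finset.sum_pos (fun j _ => Real.exp_pos _) hne
  have hgm := Real.geom_mean_le_arith_mean_weighted Finset.univ (fun _ => 1 / (m:ℝ))
    (fun j => Real.exp (x j)) (fun j _ => by positivity)
    (by simp [Finset.card_univ]; field_simp) (fun j _ => (Real.exp_pos _).le)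
  have hprod : ∏ j, Real.exp (x j) ^ ((1:ℝ) / m) = Real.exp ((∑ j, x j) / m) := by
    have : ∀ j : Fin m, Real.exp (x j) ^ ((1:ℝ)/m) = Real.exp (x j / m) := fun j => by
      rw [Real.rpow_def_of_pos (Real.exp_pos _), Real.log_exp]; ring_nf
    rw [Finset.prod_congr rfl (fun j _ => this j), ← Real.exp_sum, Finset.sum_div]
  rw [hprod] at hgm
  have hsum : ∑ j : Fin m, 1 / (m:ℝ) * Real.exp (x j) = (∑ j, Real.exp (x j)) / m := by
    rw [← Finset.mul_sum]; ring
  rw [hsum] at hgm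
  have := Real.log_le_log (Real.exp_pos _) hgm
  rw [Real.log_exp, Real.log_div (ne_of_gt hpos) (ne_of_gt hm')] at this
  linarith



/-- **Basic inequality for the LES estimator** (deterministic form of the
appendix Lemma).  Assume `y = X β* + ε` with `(2/n) max_{k,j} |X kjᵀ ε| ≤ γ`,
where `γ = λ α` and the weights are `w k = p k`.  Then for every minimizer `β̂`
of `Q` and every `β ∈ ℝ^p`,
`(1/n) ‖X (β̂ - β*)‖₂² + γ ‖β̂ - β‖₁
  ≤ (1/n) ‖X (β - β*)‖₂² + 2 γ ∑_{k ∈ G(β)} (1 + p k) ‖β̂ k - β k‖₁`. -/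
theorem les_basic_inequality (n K : ℕ) (hn : 0 < n) (hK : 0 < K)
    (p : Fin K → ℕ) (hp : ∀ k, 1 ≤ p k)
    (X : Fin n → (Σ k : Fin K, Fin (p k)) → ℝ)
    (βstar : (Σ k : Fin K, Fin (p k)) → ℝ) (ε y : Fin n → ℝ)
    (hmodel : ∀ i, y i = (∑ j : Σ k : Fin K, Fin (p k), X i j * βstar j) + ε i)
    (lam α : ℝ) (hlam : 0 < lam) (hα : 0 < α)
    (hnoise : ∀ j : Σ k : Fin K, Fin (p k),
      (2 / (n : ℝ)) * |∑ i : Fin n, X i j * ε i| ≤ lam * α)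
    (βh : (Σ k : Fin K, Fin (p k)) → ℝ)
    (hmin : IsMinOn
      (fun β : (Σ k : Fin K, Fin (p k)) → ℝ =>
        (1 / (2 * (n : ℝ))) * ∑ i : Fin n, (y i - ∑ j : Σ k : Fin K, Fin (p k), X i j * β j) ^ 2
          + lam * ∑ k : Fin K, (p k : ℝ) * Real.log (∑ j : Fin (p k), Real.exp (α * |β ⟨k, j⟩|)))
      Set.univ βh)
    (β : (Σ k : Fin K, Fin (p k)) → ℝ)
    (G : Finset (Fin K)) (hG : ∀ k, k ∈ G ↔ ∃ j : Fin (p k), β ⟨k, j⟩ ≠ 0) :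
    (1 / (n : ℝ)) * (∑ i : Fin n, (∑ j : Σ k : Fin K, Fin (p k), X i j * (βh j - βstar j)) ^ 2)
        + lam * α * ∑ j : Σ k : Fin K, Fin (p k), |βh j - β j| ≤
      (1 / (n : ℝ)) * (∑ i : Fin n, (∑ j : Σ k : Fin K, Fin (p k), X i j * (β j - βstar j)) ^ 2)
        + 2 * (lam * α) * ∑ k ∈ G, (1 + (p k : ℝ)) * ∑ j : Fin (p k), |βh ⟨k, j⟩ - β ⟨k, j⟩| := by
  have hn' : (0:ℝ) < n := Nat.cast_pos.2 hn
  set γ : ℝ := lam * α with hγ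
  set A : ((Σ k : Fin K, Fin (p k)) → ℝ) → ℝ :=
    fun v => ∑ i : Fin n, (∑ j : Σ k : Fin K, Fin (p k), X i j * (v j - βstar j)) ^ 2 with hA
  set T : ((Σ k : Fin K, Fin (p k)) → ℝ) → ℝ :=
    fun v => ∑ i : Fin n, ε i * (∑ j : Σ k : Fin K, Fin (p k), X i j * (v j - βstar j)) with hT
  set P : ((Σ k : Fin K, Fin (p k)) → ℝ) → ℝ :=
    fun v => ∑ k : Fin K, (p k : ℝ) * Real.log (∑ j : Fin (p k), Real.exp (α * |v ⟨k, j⟩|)) with hP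
  set D : Fin K → ℝ := fun k => ∑ j : Fin (p k), |βh ⟨k, j⟩ - β ⟨k, j⟩| with hD
  have hDnn : ∀ k, 0 ≤ D k := fun k => Finset.sum_nonneg fun j _ => abs_nonneg _
  -- expansion of the residual sum of squares
  have expand : ∀ v : (Σ k : Fin K, Fin (p k)) → ℝ,
      ∑ i : Fin n, (y i - ∑ j : Σ k : Fin K, Fin (p k), X i j * v j) ^ 2
        = (∑ i : Fin n, ε i ^ 2) - 2 * T v + A v := by
    intro v
    have hpt : ∀ i, y i - ∑ j : Σ k : Fin K, Fin (p k), X i j * v j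
        = ε i + (∑ j : Σ k : Fin K, Fin (p k), X i j * (v j - βstar j)) * (-1) := by
      intro i
      rw [hmodel i]
      rw [show (∑ j : Σ k : Fin K, Fin (p k), X i j * (v j - βstar j))
          = (∑ j : Σ k : Fin K, Fin (p k), X i j * v j)
            - ∑ j : Σ k : Fin K, Fin (p k), X i j * βstar j by
        rw [← Finset.sum_sub_distrib]; exact Finset.sum_congr rfl fun j _ => by ring]
      ring
    simp_rw [hpt, hA, hT]
    rw [Finset.mul_sum, ← Finset.sum_sub_distrib, ← Finset.sum_add_distrib]
    exact Finset.sum_congr rfl fun i _ => by ring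
  -- basic inequality from minimality
  have hQ := hmin (Set.mem_univ β)
  simp only [Set.mem_setOf_eq] at hQ
  have hQ' : (1 / (2 * (n:ℝ))) * ((∑ i : Fin n, ε i ^ 2) - 2 * T βh + A βh) + lam * P βh
      ≤ (1 / (2 * (n:ℝ))) * ((∑ i : Fin n, ε i ^ 2) - 2 * T β + A β) + lam * P β := by
    rw [← expand βh, ← expand β]; exact hQ
  have hstep : (1/(n:ℝ)) * A βh + 2 * lam * P βh
      ≤ (1/(n:ℝ)) * A β + 2 * lam * P β + (2/(n:ℝ)) * (T βh - T β) := by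
    have hc : (1/(n:ℝ)) = 2 * (1 / (2*(n:ℝ))) := by field_simp
    have h0 : (1/(n:ℝ)) * ((∑ i : Fin n, ε i ^ 2) - 2 * T βh + A βh) + 2 * lam * P βh
        ≤ (1/(n:ℝ)) * ((∑ i : Fin n, ε i ^ 2) - 2 * T β + A β) + 2 * lam * P β := by
      rw [hc]
      linarith
    have e1 : (1/(n:ℝ)) * ((∑ i : Fin n, ε i ^ 2) - 2 * T βh + A βh)
        = (1/(n:ℝ)) * (∑ i : Fin n, ε i ^ 2) - (2/(n:ℝ)) * T βh + (1/(n:ℝ)) * A βh := by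
      ring
    have e2 : (1/(n:ℝ)) * ((∑ i : Fin n, ε i ^ 2) - 2 * T β + A β)
        = (1/(n:ℝ)) * (∑ i : Fin n, ε i ^ 2) - (2/(n:ℝ)) * T β + (1/(n:ℝ)) * A β := by
      ring
    have e3 : (2/(n:ℝ)) * (T βh - T β) = (2/(n:ℝ)) * T βh - (2/(n:ℝ)) * T β := by ring
    linarith
  -- cross term
  have hTdiff : T βh - T β
      = ∑ j : Σ k : Fin K, Fin (p k), (∑ i : Fin n, X i j * ε i) * (βh j - β j) := by
    rw [hT]; simp only
    rw [← Finset.sum_sub_distrib]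
    have hpt : ∀ i : Fin n,
        ε i * (∑ j : Σ k : Fin K, Fin (p k), X i j * (βh j - βstar j))
          - ε i * (∑ j : Σ k : Fin K, Fin (p k), X i j * (β j - βstar j))
        = ∑ j : Σ k : Fin K, Fin (p k), X i j * ε i * (βh j - β j) := by
      intro i
      rw [← mul_sub, ← Finset.sum_sub_distrib, Finset.mul_sum]
      exact Finset.sum_congr rfl fun j _ => by ring
    rw [Finset.sum_congr rfl fun i _ => hpt i, Finset.sum_comm]
    exact Finset.sum_congr rfl fun j _ => by rw [← Finset.sum_mul]
  have hcross : (2/(n:ℝ)) * (T βh - T β)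
      ≤ γ * ∑ j : Σ k : Fin K, Fin (p k), |βh j - β j| := by
    rw [hTdiff, Finset.mul_sum, Finset.mul_sum]
    refine Finset.sum_le_sum fun j _ => ?_
    have h1 : (∑ i : Fin n, X i j * ε i) * (βh j - β j)
        ≤ |∑ i : Fin n, X i j * ε i| * |βh j - β j| := by
      rw [← abs_mul]; exact le_abs_self _
    have h2 : (2/(n:ℝ)) * ((∑ i : Fin n, X i j * ε i) * (βh j - β j))
        ≤ ((2/(n:ℝ)) * |∑ i : Fin n, X i j * ε i|) * |βh j - β j| := by
      rw [mul_assoc]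
      exact mul_le_mul_of_nonneg_left h1 (by positivity)
    have h3 := mul_le_mul_of_nonneg_right (hnoise j) (abs_nonneg (βh j - β j))
    exact h2.trans h3
  -- penalty bounds
  have hpenG : ∀ k ∈ G,
      (p k : ℝ) * Real.log (∑ j : Fin (p k), Real.exp (α * |β ⟨k, j⟩|))
        - (p k : ℝ) * Real.log (∑ j : Fin (p k), Real.exp (α * |βh ⟨k, j⟩|))
      ≤ α * ((p k : ℝ) * D k) := by
    intro k _
    have hl := lse_lip (hp k) (fun j => α * |β ⟨k, j⟩|) (fun j => α * |βh ⟨k, j⟩|)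
    have hterm : ∑ j : Fin (p k), abs (α * |β ⟨k, j⟩| - α * |βh ⟨k, j⟩|) ≤ α * D k := by
      rw [hD]; simp only [Finset.mul_sum]
      refine Finset.sum_le_sum fun j _ => ?_
      rw [← mul_sub, abs_mul, abs_of_pos hα]
      refine mul_le_mul_of_nonneg_left ?_ hα.le
      rw [abs_sub_comm (βh ⟨k, j⟩)]
      exact abs_abs_sub_abs_le_abs_sub _ _
    have hpk : (0:ℝ) ≤ (p k : ℝ) := Nat.cast_nonneg _
    have := hl.trans (add_le_add (le_refl _) hterm)
    nlinarith [this, hpk]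
  have hpenGc : ∀ k ∈ Gᶜ,
      (p k : ℝ) * Real.log (∑ j : Fin (p k), Real.exp (α * |β ⟨k, j⟩|))
        - (p k : ℝ) * Real.log (∑ j : Fin (p k), Real.exp (α * |βh ⟨k, j⟩|))
      ≤ -(α * D k) := by
    intro k hk
    have hknG : k ∉ G := Finset.mem_compl.1 hk
    have hzero : ∀ j : Fin (p k), β ⟨k, j⟩ = 0 := by
      intro j
      by_contra hne
      exact hknG ((hG k).2 ⟨j, hne⟩)
    have hpk' : (0:ℝ) < (p k : ℝ) := Nat.cast_pos.2 (hp k)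
    have hLβ : Real.log (∑ j : Fin (p k), Real.exp (α * |β ⟨k, j⟩|)) = Real.log (p k) := by
      have : ∀ j : Fin (p k), Real.exp (α * |β ⟨k, j⟩|) = 1 := fun j => by
        rw [hzero j, abs_zero, mul_zero, Real.exp_zero]
      rw [Finset.sum_congr rfl fun j _ => this j]
      simp [Finset.card_univ]
    have hj := lse_jensen (hp k) (fun j => α * |βh ⟨k, j⟩|)
    have hsum : (∑ j : Fin (p k), α * |βh ⟨k, j⟩|) = α * D k := by
      rw [hD]; simp only [Finset.mul_sum]
      exact Finset.sum_congr rfl fun j _ => by rw [hzero j, sub_zero]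
    rw [hsum] at hj
    rw [hLβ]
    have hkey : (p k : ℝ) * Real.log (p k) + α * D k
        ≤ (p k : ℝ) * Real.log (∑ j : Fin (p k), Real.exp (α * |βh ⟨k, j⟩|)) := by
      have := mul_le_mul_of_nonneg_left hj hpk'.le
      rw [mul_add, mul_div_cancel₀ _ (ne_of_gt hpk')] at this
      linarith
    linarith
  -- penalty difference bound
  have hPdiff : P β - P βh
      ≤ (∑ k ∈ G, α * ((p k : ℝ) * D k)) - ∑ k ∈ Gᶜ, α * D k := by
    rw [hP]; simp only
    rw [← Finset.sum_sub_distrib, ← Finset.sum_add_sum_compl G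
      (fun k => (p k : ℝ) * Real.log (∑ j : Fin (p k), Real.exp (α * |β ⟨k, j⟩|))
        - (p k : ℝ) * Real.log (∑ j : Fin (p k), Real.exp (α * |βh ⟨k, j⟩|)))]
    have h1 := Finset.sum_le_sum hpenG
    have h2 : (∑ k ∈ Gᶜ, ((p k : ℝ) * Real.log (∑ j : Fin (p k), Real.exp (α * |β ⟨k, j⟩|))
        - (p k : ℝ) * Real.log (∑ j : Fin (p k), Real.exp (α * |βh ⟨k, j⟩|))))
        ≤ ∑ k ∈ Gᶜ, -(α * D k) := Finset.sum_le_sum hpenGc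
    rw [Finset.sum_neg_distrib] at h2
    linarith
  -- sum decompositions
  have L1eq : (∑ j : Σ k : Fin K, Fin (p k), |βh j - β j|)
      = (∑ k ∈ G, D k) + ∑ k ∈ Gᶜ, D k := by
    rw [← Finset.univ_sigma_univ, Finset.sum_sigma]
    exact (Finset.sum_add_sum_compl G D).symm
  have RHSeq : (∑ k ∈ G, (1 + (p k : ℝ)) * D k)
      = (∑ k ∈ G, D k) + ∑ k ∈ G, (p k : ℝ) * D k := by
    rw [← Finset.sum_add_distrib]
    exact Finset.sum_congr rfl fun k _ => by ring
  -- multiply penalty bound by 2 lam and convert to γ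
  have hpen2 : 2 * lam * (P β - P βh)
      ≤ 2 * γ * (∑ k ∈ G, (p k : ℝ) * D k) - 2 * γ * ∑ k ∈ Gᶜ, D k := by
    have h := mul_le_mul_of_nonneg_left hPdiff (by positivity : (0:ℝ) ≤ 2 * lam)
    have e1 : 2 * lam * ((∑ k ∈ G, α * ((p k : ℝ) * D k)) - ∑ k ∈ Gᶜ, α * D k)
        = 2 * γ * (∑ k ∈ G, (p k : ℝ) * D k) - 2 * γ * ∑ k ∈ Gᶜ, D k := by
      rw [hγ, mul_sub, Finset.mul_sum, Finset.mul_sum, Finset.mul_sum, Finset.mul_sum]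
      congr 1 <;> exact Finset.sum_congr rfl fun k _ => by ring
    linarith [h, e1.le, e1.ge]
  -- final assembly
  rw [L1eq, RHSeq]
  have hγpos : 0 < γ := mul_pos hlam hα
  rw [L1eq] at hcross
  nlinarith [hstep, hcross, hpen2, hγpos, hDnn]
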